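/- Let G be a directed graph, let P be a directed path from vertex x to vertex y, and let Q be a directed path from y to x. Then there exist directed cycles C_1, ..., C_k such that the mod-2 sum of C_1, ..., C_k equals the symmetric difference of (the edge sets of) P and Q, and the union of the C_i equals the union of P and Q. -/

import Mathlib

open scoped Classical

variable {V : Type*}

/-- `E` is the edge set of a directed path from `x` to `y` in the digraph `R`. -/
def IsDiPathSet (R : V → V → Prop) (x y : V) (E : Finset (V × V)) : Prop :=
  ∃ l : List V, l.Nodup ∧ l.Chain' R ∧ l.head? = some x ∧ l.getLast? = some y ∧
    E = (l.zip l.tail).toFinset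

/-- `E` is the edge set of a directed cycle in the digraph `R`. -/
def IsDiCycleSet (R : V → V → Prop) (E : Finset (V × V)) : Prop :=
  ∃ l : List V, l ≠ [] ∧ l.Nodup ∧ (∀ p ∈ l.zip (l.rotate 1), R p.1 p.2) ∧
    E = (l.zip (l.rotate 1)).toFinset

def wE (l : List V) : List (V × V) := l.zip l.tail
@[simp] lemma wE_nil : wE ([] : List V) = [] := rfl
@[simp] lemma wE_single (v : V) : wE [v] = [] := rfl
@[simp] lemma wE_cons_cons (a b : V) (l : List V) :
    wE (a :: b :: l) = (a, b) :: wE (b :: l) := rfl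
lemma zip_append_left {α β : Type*} :
    ∀ (m : List α) (X : List β) (s : List α), X.length ≤ m.length →
      (m ++ s).zip X = m.zip X
  | _, [], _, _ => by simp
  | [], _ :: _, _, h => by simp at h
  | a :: m, x :: X, s, h => by
    simp only [List.cons_append, List.zip_cons_cons]
    rw [zip_append_left m X s (by simpa using h)]
lemma wE_glue : ∀ (a b : List V), a ≠ [] → a.getLast? = b.head? →
    wE (a ++ b.tail) = wE a ++ wE b
  | [], _, h, _ => absurd rfl h
  | [v], b, _, hab => by
    cases b with
    | nil => simp at hab
    | cons c t =>
      simp only [List.getLast?_singleton, List.head?_cons, Option.some_inj] at hab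
      subst hab
      show wE (v :: t) = wE [v] ++ wE (v :: t)
      simp
  | x :: y :: a', b, _, hab => by
    have ih := wE_glue (y :: a') b (by simp)
      (by simpa only [List.getLast?_cons_cons] using hab)
    show wE (x :: ((y :: a') ++ b.tail)) = wE (x :: y :: a') ++ wE b
    simp only [List.cons_append, wE_cons_cons] at ih ⊢
    rw [ih]
lemma cE_eq (v : V) (m : List V) :
    wE (v :: m ++ [v]) = (v :: m).zip ((v :: m).rotate 1) := by
  rw [List.rotate_cons_succ, List.rotate_zero]
  show ((v :: m) ++ [v]).zip (m ++ [v]) = (v :: m).zip (m ++ [v])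
  exact zip_append_left (v :: m) (m ++ [v]) [v] (by simp)
lemma chain'_wE {R : V → V → Prop} :
    ∀ {l : List V}, l.Chain' R → ∀ p ∈ wE l, R p.1 p.2
  | [], _, p, hp => by simp at hp
  | [_], _, p, hp => by simp at hp
  | x :: y :: t, h, p, hp => by
    unfold List.Chain' at h
    rw [List.isChain_cons_cons] at h
    rw [wE_cons_cons, List.mem_cons] at hp
    rcases hp with rfl | hp
    · exact h.1
    · exact chain'_wE h.2 p hp
lemma exists_dup_split : ∀ {l : List V}, ¬ l.Nodup →
    ∃ (u : V) (A B C : List V), l = A ++ u :: B ++ u :: C := by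
  intro l
  induction l with
  | nil => simp
  | cons x t ih =>
    intro h
    rw [List.nodup_cons] at h
    by_cases hx : x ∈ t
    · obtain ⟨B, C, rfl⟩ := List.append_of_mem hx
      exact ⟨x, [], B, C, rfl⟩
    · have ht : ¬ t.Nodup := fun hn => h ⟨hx, hn⟩
      obtain ⟨u, A, B, C, rfl⟩ := ih ht
      exact ⟨u, x :: A, B, C, rfl⟩

lemma walk_decomp (R : V → V → Prop) : ∀ (n : ℕ) (l : List V), l.length ≤ n → l ≠ [] →
    l.head? = l.getLast? → l.Chain' R →
    ∃ L : List (List V),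
      (∀ c ∈ L, c ≠ [] ∧ c.Nodup ∧ ∀ p ∈ c.zip (c.rotate 1), R p.1 p.2) ∧
      (L.map fun c => ((c.zip (c.rotate 1) : List (V × V)) : Multiset (V × V))).sum
        = (wE l : Multiset (V × V)) := by
  intro n
  induction n with
  | zero =>
    intro l hl hne
    rw [Nat.le_zero, List.length_eq_zero_iff] at hl
    exact absurd hl hne
  | succ n ih =>
    intro l hlen hne hcl hch
    obtain ⟨v, t, rfl⟩ := List.exists_cons_of_ne_nil hne
    have hhead : (v :: t).head? = some v := rfl
    have hlast : (v :: t).getLast? = some v := by rw [← hcl]; rfl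
    cases t with
    | nil => exact ⟨[], by simp, by simp⟩
    | cons w t' =>
      have hdrop : (v :: w :: t').dropLast ++ [v] = v :: w :: t' :=
        List.dropLast_append_getLast? v hlast
      by_cases hnd : (v :: w :: t').dropLast.Nodup
      · -- single simple cycle
        have hd : (v :: w :: t').dropLast = v :: (w :: t').dropLast := by
          simp [List.dropLast_cons₂]
        set m := (w :: t').dropLast with hm
        have hl_eq : v :: w :: t' = v :: m ++ [v] := by
          rw [← hdrop, hd]
        refine ⟨[v :: m], ?_, ?_⟩
        · intro c hc
          simp only [List.mem_singleton] at hc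
          subst hc
          refine ⟨by simp, by rw [← hd]; exact hnd, ?_⟩
          intro p hp
          apply chain'_wE hch
          rw [hl_eq, cE_eq]
          exact hp
        · simp only [List.map_cons, List.map_nil, List.sum_cons, List.sum_nil, add_zero]
          rw [← cE_eq, ← hl_eq]
      · -- split at a repeated vertex
        obtain ⟨u, A, B, C, hsplit⟩ := exists_dup_split hnd
        have hl_eq : v :: w :: t' = A ++ u :: B ++ u :: (C ++ [v]) := by
          rw [← hdrop, hsplit]
          simp
        -- walk 1 : u :: B ++ [u]
        have hW1ch : (u :: B ++ [u]).Chain' R := by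
          apply hch.infix
          exact ⟨A, C ++ [v], by rw [hl_eq]; simp⟩
        have hW1len : (u :: B ++ [u]).length ≤ n := by
          have := hlen
          rw [hl_eq] at this
          simp at this ⊢
          omega
        obtain ⟨L1, hL1c, hL1s⟩ := ih (u :: B ++ [u]) hW1len (by simp)
          (by rw [show u :: B ++ [u] = (u :: B) ++ [u] by simp,
                List.getLast?_append_of_ne_nil _ (by simp)]; simp) hW1ch
        -- walk 2 : A ++ u :: (C ++ [v])
        have hch' := hch
        rw [hl_eq] at hch'
        rw [show A ++ u :: B ++ u :: (C ++ [v]) = A ++ (u :: B ++ u :: (C ++ [v])) by simp]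
          at hch'
        unfold List.Chain' at hch'
        rw [List.isChain_append] at hch'
        obtain ⟨hA, hrest, hlink⟩ := hch'
        have hud : (u :: (C ++ [v])).Chain' R := by
          have : u :: B ++ u :: (C ++ [v]) = (u :: B) ++ (u :: (C ++ [v])) := by simp
          rw [this, List.isChain_append] at hrest
          exact hrest.2.1
        have hW2ch : (A ++ u :: (C ++ [v])).Chain' R := by
          unfold List.Chain'
          rw [show A ++ u :: (C ++ [v]) = A ++ (u :: (C ++ [v])) from rfl, List.isChain_append]
          exact ⟨hA, hud, fun a ha b hb => by
            simp only [List.head?_cons, Option.mem_def, Option.some_inj] at hb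
            subst hb
            exact hlink a ha u rfl⟩
        have hW2len : (A ++ u :: (C ++ [v])).length ≤ n := by
          have := hlen
          rw [hl_eq] at this
          simp at this ⊢
          omega
        have hW2cl : (A ++ u :: (C ++ [v])).head? = (A ++ u :: (C ++ [v])).getLast? := by
          have h1 : (A ++ u :: (C ++ [v])).getLast? = some v := by
            rw [List.getLast?_append_of_ne_nil _ (by simp)]
            rw [show u :: (C ++ [v]) = (u :: C) ++ [v] by simp]
            rw [List.getLast?_append_of_ne_nil _ (by simp)]
            simp
          have h2 : (A ++ u :: (C ++ [v])).head? = some v := by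
            have h3 : (v :: w :: t').head? = some v := rfl
            rw [hl_eq] at h3
            rw [show A ++ u :: B ++ u :: (C ++ [v]) = A ++ (u :: (B ++ u :: (C ++ [v])))
              by simp] at h3
            rw [List.head?_append] at h3 ⊢
            simpa using h3
          rw [h1, h2]
        obtain ⟨L2, hL2c, hL2s⟩ := ih (A ++ u :: (C ++ [v])) hW2len (by simp) hW2cl hW2ch
        refine ⟨L2 ++ L1, ?_, ?_⟩
        · intro c hc
          rcases List.mem_append.1 hc with hc | hc
          · exact hL2c c hc
          · exact hL1c c hc
        · rw [List.map_append, List.sum_append, hL1s, hL2s]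
          -- edge multiset identity
          have e1 : wE (v :: w :: t') = wE (A ++ [u]) ++ wE (u :: B ++ u :: (C ++ [v])) := by
            rw [hl_eq]
            have := wE_glue (A ++ [u]) (u :: B ++ u :: (C ++ [v])) (by simp)
              (by rw [List.getLast?_append_of_ne_nil _ (by simp)]; simp)
            rw [show (A ++ [u]) ++ (u :: B ++ u :: (C ++ [v])).tail
                = A ++ u :: B ++ u :: (C ++ [v]) by simp] at this
            exact this
          have e2 : wE (u :: B ++ u :: (C ++ [v]))
              = wE (u :: B ++ [u]) ++ wE (u :: (C ++ [v])) := by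
            have := wE_glue (u :: B ++ [u]) (u :: (C ++ [v]))
              (by simp)
              (by rw [show u :: B ++ [u] = (u :: B) ++ [u] by simp,
                    List.getLast?_append_of_ne_nil _ (by simp)]; simp)
            rw [show (u :: B ++ [u]) ++ (u :: (C ++ [v])).tail
                = u :: B ++ u :: (C ++ [v]) by simp] at this
            exact this
          have e3 : wE (A ++ u :: (C ++ [v])) = wE (A ++ [u]) ++ wE (u :: (C ++ [v])) := by
            have := wE_glue (A ++ [u]) (u :: (C ++ [v])) (by simp)
              (by rw [List.getLast?_append_of_ne_nil _ (by simp)]; simp)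
            rw [show (A ++ [u]) ++ (u :: (C ++ [v])).tail = A ++ u :: (C ++ [v]) by simp]
              at this
            exact this
          rw [e1, e2, e3]
          simp only [← Multiset.coe_add]
          abel

lemma nodup_wE {l : List V} (h : l.Nodup) : (wE l).Nodup := by
  cases l with
  | nil => simp
  | cons v t =>
    show ((v :: t).zip t).Nodup
    have h1 : (v :: t).zip t = ((v :: t).take t.length).zip t := by
      conv_lhs => rw [← List.take_append_drop t.length (v :: t)]
      exact zip_append_left _ _ _ (by simp)
    rw [h1]
    apply List.Nodup.of_map Prod.fst
    rw [List.map_fst_zip (by simp)]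
    exact (List.take_sublist _ _).nodup h

lemma nodup_cE {c : List V} (h : c.Nodup) : (c.zip (c.rotate 1)).Nodup := by
  apply List.Nodup.of_map Prod.fst
  rw [List.map_fst_zip (by simp)]
  exact h

lemma count_list_sum {α : Type*} (e : α) :
    ∀ M : List (Multiset α), Multiset.count e M.sum = (M.map (Multiset.count e)).sum
  | [] => by simp
  | m :: M => by simp [count_list_sum e M]

lemma key_count (e : V × V) :
    ∀ (L : List (List V)), (∀ c ∈ L, c.Nodup) →
    (Finset.univ.filter fun i : Fin L.length =>
        e ∈ ((L.get i).zip ((L.get i).rotate 1)).toFinset).card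
      = Multiset.count e
          (L.map fun c => ((c.zip (c.rotate 1) : List (V × V)) : Multiset (V × V))).sum := by
  intro L
  induction L with
  | nil => simp
  | cons c L ih =>
    intro h
    have hc : (c.zip (c.rotate 1)).Nodup := nodup_cE (h c (by simp))
    have hcount : Multiset.count e ((c.zip (c.rotate 1) : List (V × V)) : Multiset (V × V))
        = if e ∈ (c.zip (c.rotate 1)).toFinset then 1 else 0 := by
      split_ifs with hm
      · exact Multiset.count_eq_one_of_mem (Multiset.coe_nodup.2 hc) (by simpa using hm)
      · exact Multiset.count_eq_zero_of_notMem (by simpa using hm)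
    rw [List.map_cons, List.sum_cons, Multiset.count_add, hcount,
      ← ih (fun d hd => h d (List.mem_cons_of_mem _ hd))]
    rw [Finset.card_filter, Finset.card_filter]
    simp only [List.length_cons]
    rw [Fin.sum_univ_succ]
    simp

/-- If `P` is the edge set of a directed path from `x` to `y` and `Q`
is the edge set of a directed path from `y` to `x`, then there are directed cycles
`C 0, …, C (k-1)` whose mod-2 sum is the symmetric difference of `P` and `Q` and whose
union is `P ∪ Q`. -/
theorem stmt2 [Fintype V] (R : V → V → Prop) (x y : V) (P Q : Finset (V × V))
    (hP : IsDiPathSet R x y P) (hQ : IsDiPathSet R y x Q) :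
    ∃ (k : ℕ) (C : Fin k → Finset (V × V)),
      (∀ i, IsDiCycleSet R (C i)) ∧
      (∀ e : V × V,
        Odd ((Finset.univ.filter fun i : Fin k => e ∈ C i).card) ↔
          e ∈ (P \ Q) ∪ (Q \ P)) ∧
      Finset.univ.biUnion C = P ∪ Q := by
  obtain ⟨p, hpnd, hpch, hphead, hplast, hPE⟩ := hP
  obtain ⟨q, hqnd, hqch, hqhead, hqlast, hQE⟩ := hQ
  have hpne : p ≠ [] := by intro h; rw [h] at hphead; simp at hphead
  obtain ⟨q0, qt, rfl⟩ : ∃ q0 qt, q = q0 :: qt := by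
    cases q with
    | nil => simp at hqhead
    | cons a b => exact ⟨a, b, rfl⟩
  have hq0 : q0 = y := by simpa using hqhead
  have hglue : wE (p ++ qt) = wE p ++ wE (q0 :: qt) := by
    have := wE_glue p (q0 :: qt) hpne (by rw [hplast, ← hq0]; rfl)
    simpa using this
  have hlne : p ++ qt ≠ [] := by simp [hpne]
  have hlhead : (p ++ qt).head? = some x := by
    rw [List.head?_append, hphead]; rfl
  have hllast : (p ++ qt).getLast? = some x := by
    cases qt with
    | nil =>
      have hx : q0 = x := by simpa using hqlast
      simp only [List.append_nil]
      rw [hplast, ← hq0, hx]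
    | cons q1 qt' =>
      rw [List.getLast?_append_of_ne_nil _ (by simp)]
      have h5 := hqlast
      rw [List.getLast?_cons_cons] at h5
      exact h5
  have hqtail : qt.Chain' R := (List.isChain_cons.1 hqch).2
  have hlch : (p ++ qt).Chain' R := by
    apply List.isChain_append.2
    refine ⟨hpch, hqtail, ?_⟩
    intro a ha b hb
    have haa : y = a := by rw [hplast] at ha; simpa using ha
    subst haa
    rw [← hq0]
    exact (List.isChain_cons.1 hqch).1 b hb
  obtain ⟨L, hLc, hLs⟩ := walk_decomp R (p ++ qt).length (p ++ qt) le_rfl hlne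
    (by rw [hlhead, hllast]) hlch
  refine ⟨L.length, fun i => ((L.get i).zip ((L.get i).rotate 1)).toFinset, ?_, ?_, ?_⟩
  · intro i
    obtain ⟨h1, h2, h3⟩ := hLc _ (L.get_mem i)
    exact ⟨L.get i, h1, h2, h3, rfl⟩
  all_goals {
    have hcard : ∀ e : V × V,
        (Finset.univ.filter fun i : Fin L.length =>
            e ∈ ((L.get i).zip ((L.get i).rotate 1)).toFinset).card
          = (if e ∈ P then 1 else 0) + (if e ∈ Q then 1 else 0) := by
      intro e
      rw [key_count e L (fun c hc => (hLc c hc).2.1), hLs, hglue,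
        ← Multiset.coe_add, Multiset.count_add]
      congr 1
      · split_ifs with hm
        · exact Multiset.count_eq_one_of_mem (Multiset.coe_nodup.2 (nodup_wE hpnd))
            (by rw [hPE] at hm; simpa [wE] using hm)
        · exact Multiset.count_eq_zero_of_notMem (by rw [hPE] at hm; simpa [wE] using hm)
      · split_ifs with hm
        · exact Multiset.count_eq_one_of_mem (Multiset.coe_nodup.2 (nodup_wE hqnd))
            (by rw [hQE] at hm; simpa [wE] using hm)
        · exact Multiset.count_eq_zero_of_notMem (by rw [hQE] at hm; simpa [wE] using hm)
    first
    | · intro e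
        rw [hcard e]
        by_cases h1 : e ∈ P <;> by_cases h2 : e ∈ Q <;>
          simp [h1, h2, Finset.mem_union, Finset.mem_sdiff, Nat.odd_iff]
    | · ext e
        simp only [Finset.mem_biUnion, Finset.mem_union, Finset.mem_univ, true_and]
        have hpos : (∃ i, e ∈ ((L.get i).zip ((L.get i).rotate 1)).toFinset) ↔
            0 < (Finset.univ.filter fun i : Fin L.length =>
              e ∈ ((L.get i).zip ((L.get i).rotate 1)).toFinset).card := by
          rw [Finset.card_pos, Finset.filter_nonempty_iff]
          simp
        rw [hpos, hcard e]
        by_cases h1 : e ∈ P <;> by_cases h2 : e ∈ Q <;> simp [h1, h2]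
  }
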